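/- Let 1 ≤ k < n. For all skew-Hermitian X, Y ∈ ℂ^{n×n} of the block form [[A, −B†],[B, 0]] (A ∈ ℂ^{k×k} skew-Hermitian, B ∈ ℂ^{(n−k)×k}) satisfying (1/2)‖X‖_F² = (1/2)‖Y‖_F² = 1 and Re tr(X†Y) = 0, the sectional curvature of the Stiefel manifold satisfies K(X,Y) = (1/8)·‖[X,Y]‖_F² + (3/8)·‖Π([X,Y])‖_F² ≤ 5/2, where [X,Y] = XY − YX and Π(Z) denotes the matrix whose lower-right (n−k)×(n−k) block equals that of Z and whose other blocks are zero. -/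

import Mathlib

open Matrix

/-- The Frobenius norm of a complex matrix. -/
noncomputable def frobNorm {m n : Type*} [Fintype m] [Fintype n]
    (M : Matrix m n ℂ) : ℝ :=
  Real.sqrt (∑ i, ∑ j, ‖M i j‖ ^ 2)

/-- Projection onto the vertical subalgebra of the Stiefel manifold: keep only the
lower-right `(n−k)×(n−k)` block. -/
def verticalProjStiefel (k m : ℕ) (Z : Matrix (Fin k ⊕ Fin m) (Fin k ⊕ Fin m) ℂ) :
    Matrix (Fin k ⊕ Fin m) (Fin k ⊕ Fin m) ℂ :=
  Matrix.fromBlocks 0 0 0 (Z.toBlocks₂₂)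

attribute [local instance] Matrix.frobeniusSeminormedAddCommGroup

lemma frobNorm_eq_norm {m n : Type*} [Fintype m] [Fintype n] (M : Matrix m n ℂ) :
    frobNorm M = ‖M‖ := by
  rw [frobNorm, Matrix.frobenius_norm_def, Real.sqrt_eq_rpow]
  congr 1
  refine Finset.sum_congr rfl fun i _ => Finset.sum_congr rfl fun j _ => ?_
  rw [show ((2:ℝ)) = ((2:ℕ):ℝ) by norm_num, Real.rpow_natCast]

lemma frobNorm_nonneg {m n : Type*} [Fintype m] [Fintype n] (M : Matrix m n ℂ) :
    0 ≤ frobNorm M := Real.sqrt_nonneg _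

lemma sq_frobNorm {m n : Type*} [Fintype m] [Fintype n] (M : Matrix m n ℂ) :
    frobNorm M ^ 2 = ∑ i, ∑ j, ‖M i j‖ ^ 2 := by
  rw [frobNorm, Real.sq_sqrt]
  positivity

lemma frobNorm_conjTranspose {m n : Type*} [Fintype m] [Fintype n] (M : Matrix m n ℂ) :
    frobNorm Mᴴ = frobNorm M := by
  rw [frobNorm_eq_norm, frobNorm_eq_norm, Matrix.frobenius_norm_conjTranspose]

lemma frobNorm_neg {m n : Type*} [Fintype m] [Fintype n] (M : Matrix m n ℂ) :
    frobNorm (-M) = frobNorm M := by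
  rw [frobNorm_eq_norm, frobNorm_eq_norm, norm_neg]

lemma frobNorm_sub_le {m n : Type*} [Fintype m] [Fintype n] (M N : Matrix m n ℂ) :
    frobNorm (M - N) ≤ frobNorm M + frobNorm N := by
  rw [frobNorm_eq_norm, frobNorm_eq_norm, frobNorm_eq_norm]
  exact norm_sub_le M N

lemma frobNorm_mul_le {l m n : Type*} [Fintype l] [Fintype m] [Fintype n]
    (M : Matrix l m ℂ) (N : Matrix m n ℂ) :
    frobNorm (M * N) ≤ frobNorm M * frobNorm N := by
  rw [frobNorm_eq_norm, frobNorm_eq_norm, frobNorm_eq_norm]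
  exact Matrix.frobenius_norm_mul M N

lemma sq_frobNorm_fromBlocks {k m : ℕ}
    (A : Matrix (Fin k) (Fin k) ℂ) (B : Matrix (Fin k) (Fin m) ℂ)
    (C : Matrix (Fin m) (Fin k) ℂ) (D : Matrix (Fin m) (Fin m) ℂ) :
    frobNorm (Matrix.fromBlocks A B C D) ^ 2 =
      frobNorm A ^ 2 + frobNorm B ^ 2 + frobNorm C ^ 2 + frobNorm D ^ 2 := by
  simp only [sq_frobNorm]
  rw [Fintype.sum_sum_type]
  simp_rw [Fintype.sum_sum_type, Matrix.fromBlocks_apply₁₁, Matrix.fromBlocks_apply₁₂,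
    Matrix.fromBlocks_apply₂₁, Matrix.fromBlocks_apply₂₂, Finset.sum_add_distrib]
  ring

lemma frobNorm_zero {m n : Type*} [Fintype m] [Fintype n] :
    frobNorm (0 : Matrix m n ℂ) = 0 := by
  simp [frobNorm]

/-- **Sectional curvature bound for the Stiefel manifold** `V_{k,n}` (`1 ≤ k < n`,
`m = n − k ≥ 1`): for orthonormal horizontal tangents `X, Y` of block form
`[[A, −Bᴴ],[B, 0]]`, the sectional curvature
`K(X,Y) = (1/8)‖[X,Y]‖_F² + (3/8)‖[X,Y]^∥‖_F²` is at most `5/2`. -/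
lemma stiefel_key_ineq (a₁ a₂ b₁ b₂ : ℝ) (ha₁ : 0 ≤ a₁) (ha₂ : 0 ≤ a₂)
    (hb₁ : 0 ≤ b₁) (hb₂ : 0 ≤ b₂)
    (hX : a₁ ^ 2 + 2 * b₁ ^ 2 = 2) (hY : a₂ ^ 2 + 2 * b₂ ^ 2 = 2) :
    (1/8) * ((a₁ * a₂ + b₁ * b₂ + (a₂ * a₁ + b₂ * b₁)) ^ 2 + (a₁ * b₂ + a₂ * b₁) ^ 2 +
      (b₁ * a₂ + b₂ * a₁) ^ 2 + (b₁ * b₂ + b₂ * b₁) ^ 2) +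
      (3/8) * (b₁ * b₂ + b₂ * b₁) ^ 2 ≤ 5 / 2 := by
  have h1 : (0:ℝ) ≤ 2 - 2 * b₁ ^ 2 := by nlinarith [sq_nonneg a₁]
  have h2 : (0:ℝ) ≤ 2 - 2 * b₂ ^ 2 := by nlinarith [sq_nonneg a₂]
  nlinarith [sq_nonneg (a₁ * b₂ - a₂ * b₁), mul_nonneg h1 h2,
    mul_nonneg (mul_nonneg ha₁ ha₂) (mul_nonneg hb₁ hb₂), sq_nonneg (a₁ * a₂ - 2 * b₁ * b₂),
    mul_nonneg (mul_nonneg hb₁ hb₂) (mul_nonneg hb₁ hb₂)]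

set_option maxHeartbeats 2000000 in
theorem stiefel_sectional_curvature_le (k m : ℕ) (hk : 1 ≤ k) (hm : 1 ≤ m)
    (A₁ A₂ : Matrix (Fin k) (Fin k) ℂ) (B₁ B₂ : Matrix (Fin m) (Fin k) ℂ)
    (hA₁ : A₁ᴴ = -A₁) (hA₂ : A₂ᴴ = -A₂) :
    let X := Matrix.fromBlocks A₁ (-B₁ᴴ) B₁ 0
    let Y := Matrix.fromBlocks A₂ (-B₂ᴴ) B₂ 0
    (1 / 2) * frobNorm X ^ 2 = 1 →
    (1 / 2) * frobNorm Y ^ 2 = 1 →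
    (Matrix.trace (Xᴴ * Y)).re = 0 →
    (1 / 8) * frobNorm (X * Y - Y * X) ^ 2 +
      (3 / 8) * frobNorm (verticalProjStiefel k m (X * Y - Y * X)) ^ 2 ≤ 5 / 2 := by
  intro X Y h1 h2 _
  -- Commutator in block form
  have hcomm : X * Y - Y * X =
      Matrix.fromBlocks
        ((A₁ * A₂ + (-B₁ᴴ) * B₂) - (A₂ * A₁ + (-B₂ᴴ) * B₁))
        (A₁ * (-B₂ᴴ) - A₂ * (-B₁ᴴ))
        (B₁ * A₂ - B₂ * A₁)
        (B₁ * (-B₂ᴴ) - B₂ * (-B₁ᴴ)) := by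
    show Matrix.fromBlocks A₁ (-B₁ᴴ) B₁ 0 * Matrix.fromBlocks A₂ (-B₂ᴴ) B₂ 0 -
        Matrix.fromBlocks A₂ (-B₂ᴴ) B₂ 0 * Matrix.fromBlocks A₁ (-B₁ᴴ) B₁ 0 = _
    rw [Matrix.fromBlocks_multiply, Matrix.fromBlocks_multiply]
    ext (i | i) (j | j) <;>
      simp [Matrix.fromBlocks_apply₁₁, Matrix.fromBlocks_apply₁₂,
        Matrix.fromBlocks_apply₂₁, Matrix.fromBlocks_apply₂₂, Matrix.sub_apply]
  set C₁₁ := (A₁ * A₂ + (-B₁ᴴ) * B₂) - (A₂ * A₁ + (-B₂ᴴ) * B₁) with hC11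
  set C₁₂ := A₁ * (-B₂ᴴ) - A₂ * (-B₁ᴴ) with hC12
  set C₂₁ := B₁ * A₂ - B₂ * A₁ with hC21
  set C₂₂ := B₁ * (-B₂ᴴ) - B₂ * (-B₁ᴴ) with hC22
  have hvert : verticalProjStiefel k m (X * Y - Y * X) =
      Matrix.fromBlocks 0 0 0 C₂₂ := by
    rw [hcomm, verticalProjStiefel, Matrix.toBlocks_fromBlocks₂₂]
  -- norms of the pieces
  set a₁ := frobNorm A₁ with ha₁
  set a₂ := frobNorm A₂ with ha₂
  set b₁ := frobNorm B₁ with hb₁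
  set b₂ := frobNorm B₂ with hb₂
  have ha₁0 : 0 ≤ a₁ := frobNorm_nonneg _
  have ha₂0 : 0 ≤ a₂ := frobNorm_nonneg _
  have hb₁0 : 0 ≤ b₁ := frobNorm_nonneg _
  have hb₂0 : 0 ≤ b₂ := frobNorm_nonneg _
  -- the norm constraints
  have hX : a₁ ^ 2 + 2 * b₁ ^ 2 = 2 := by
    have := h1
    rw [show X = Matrix.fromBlocks A₁ (-B₁ᴴ) B₁ 0 from rfl,
      sq_frobNorm_fromBlocks, frobNorm_neg, frobNorm_conjTranspose, frobNorm_zero] at this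
    linarith [this]
  have hY : a₂ ^ 2 + 2 * b₂ ^ 2 = 2 := by
    have := h2
    rw [show Y = Matrix.fromBlocks A₂ (-B₂ᴴ) B₂ 0 from rfl,
      sq_frobNorm_fromBlocks, frobNorm_neg, frobNorm_conjTranspose, frobNorm_zero] at this
    linarith [this]
  -- bounds on the commutator blocks
  have bnd : ∀ {p q : Type} [Fintype p] [Fintype q] (M N : Matrix p q ℂ) (c : ℝ),
      frobNorm M + frobNorm N ≤ c → frobNorm (M - N) ^ 2 ≤ c ^ 2 := by
    intro p q _ _ M N c h
    have h0 : 0 ≤ frobNorm (M - N) := frobNorm_nonneg _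
    have := (frobNorm_sub_le M N).trans h
    nlinarith
  have h11 : frobNorm C₁₁ ^ 2 ≤ (a₁ * a₂ + b₁ * b₂ + (a₂ * a₁ + b₂ * b₁)) ^ 2 := by
    apply bnd
    have t1 : frobNorm (A₁ * A₂ + (-B₁ᴴ) * B₂) ≤ a₁ * a₂ + b₁ * b₂ := by
      calc frobNorm (A₁ * A₂ + (-B₁ᴴ) * B₂)
          ≤ frobNorm (A₁ * A₂) + frobNorm ((-B₁ᴴ) * B₂) := by
            have := frobNorm_sub_le (A₁ * A₂) (-((-B₁ᴴ) * B₂))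
            simpa [sub_neg_eq_add, frobNorm_neg, ← sub_eq_add_neg] using this
        _ ≤ a₁ * a₂ + b₁ * b₂ := by
            have m1 := frobNorm_mul_le A₁ A₂
            have m2 := frobNorm_mul_le (-B₁ᴴ) B₂
            rw [frobNorm_neg, frobNorm_conjTranspose] at m2
            exact add_le_add m1 m2
    have t2 : frobNorm (A₂ * A₁ + (-B₂ᴴ) * B₁) ≤ a₂ * a₁ + b₂ * b₁ := by
      calc frobNorm (A₂ * A₁ + (-B₂ᴴ) * B₁)
          ≤ frobNorm (A₂ * A₁) + frobNorm ((-B₂ᴴ) * B₁) := by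
            have := frobNorm_sub_le (A₂ * A₁) (-((-B₂ᴴ) * B₁))
            simpa [sub_neg_eq_add, frobNorm_neg, ← sub_eq_add_neg] using this
        _ ≤ a₂ * a₁ + b₂ * b₁ := by
            have m1 := frobNorm_mul_le A₂ A₁
            have m2 := frobNorm_mul_le (-B₂ᴴ) B₁
            rw [frobNorm_neg, frobNorm_conjTranspose] at m2
            exact add_le_add m1 m2
    exact add_le_add t1 t2
  have h12 : frobNorm C₁₂ ^ 2 ≤ (a₁ * b₂ + a₂ * b₁) ^ 2 := by
    apply bnd
    have t1 : frobNorm (A₁ * (-B₂ᴴ)) ≤ a₁ * b₂ := by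
      have m1 := frobNorm_mul_le A₁ (-B₂ᴴ)
      rwa [frobNorm_neg, frobNorm_conjTranspose] at m1
    have t2 : frobNorm (A₂ * (-B₁ᴴ)) ≤ a₂ * b₁ := by
      have m1 := frobNorm_mul_le A₂ (-B₁ᴴ)
      rwa [frobNorm_neg, frobNorm_conjTranspose] at m1
    exact add_le_add t1 t2
  have h21 : frobNorm C₂₁ ^ 2 ≤ (b₁ * a₂ + b₂ * a₁) ^ 2 := by
    apply bnd
    have t1 : frobNorm (B₁ * A₂) ≤ b₁ * a₂ := frobNorm_mul_le B₁ A₂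
    have t2 : frobNorm (B₂ * A₁) ≤ b₂ * a₁ := frobNorm_mul_le B₂ A₁
    exact add_le_add t1 t2
  have h22 : frobNorm C₂₂ ^ 2 ≤ (b₁ * b₂ + b₂ * b₁) ^ 2 := by
    apply bnd
    have t1 : frobNorm (B₁ * (-B₂ᴴ)) ≤ b₁ * b₂ := by
      have m1 := frobNorm_mul_le B₁ (-B₂ᴴ)
      rwa [frobNorm_neg, frobNorm_conjTranspose] at m1
    have t2 : frobNorm (B₂ * (-B₁ᴴ)) ≤ b₂ * b₁ := by
      have m1 := frobNorm_mul_le B₂ (-B₁ᴴ)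
      rwa [frobNorm_neg, frobNorm_conjTranspose] at m1
    exact add_le_add t1 t2
  have hfull : frobNorm (X * Y - Y * X) ^ 2 =
      frobNorm C₁₁ ^ 2 + frobNorm C₁₂ ^ 2 + frobNorm C₂₁ ^ 2 + frobNorm C₂₂ ^ 2 := by
    rw [hcomm, sq_frobNorm_fromBlocks]
  have hvertsq : frobNorm (verticalProjStiefel k m (X * Y - Y * X)) ^ 2 =
      frobNorm C₂₂ ^ 2 := by
    rw [hvert, sq_frobNorm_fromBlocks]
    simp [frobNorm_zero]
  rw [hfull, hvertsq]
  have hkey := stiefel_key_ineq a₁ a₂ b₁ b₂ ha₁0 ha₂0 hb₁0 hb₂0 hX hY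
  linarith [h11, h12, h21, h22, hkey]
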